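/- The formal power series identity \frac{1}{1 - wG(t,w)} where wG(t,w) = w\widetilde{\Gamma}_{G(2,1)}(t,w) has expansion beginning 1 + 2wt + (2w^2+w)4t^2 + (5w^3+5w^2+w)8t^3 + (14w^4+21w^3+9w^2+w)16t^4 + \cdots, given that wG(t,w) = 2wt + (w^2+w)4t^2 + (2w^3+3w^2+w)8t^3 + (5w^4+10w^3+6w^2+w)16t^4 + \cdots; in particular the coefficients of w^s (2t)^n in 1/(1-wG) are the entries of the f-vectors of the Stasheff associahedra: the coefficient of w^s(2t)^n equals the number of (s-1)-codimensional faces of the (n-1)-dimensional associahedron. -/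

import Mathlib

open Polynomial in
/-- given that `A = w·Γ̃_{G(2,1)}(t,w)` has expansion
`2wt + (w²+w)4t² + (2w³+3w²+w)8t³ + (5w⁴+10w³+6w²+w)16t⁴ + ⋯`, the series
`B = 1/(1-A)` has expansion
`1 + 2wt + (2w²+w)4t² + (5w³+5w²+w)8t³ + (14w⁴+21w³+9w²+w)16t⁴ + ⋯`; in particular
`s` times the coefficient of `w^s (2t)^n` in `B` equals the Kirkman–Cayley number
numerator `C(n-1,s-1)·C(n+s,s-1)`, counting the `(s-1)`-codimensional faces of the
`(n-1)`-dimensional Stasheff associahedron. -/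
theorem stmt_11 (A B : PowerSeries (Polynomial ℚ))
    (h0 : PowerSeries.coeff 0 A = 0)
    (h1 : PowerSeries.coeff 1 A = 2 * X)
    (h2 : PowerSeries.coeff 2 A = 4 * (X ^ 2 + X))
    (h3 : PowerSeries.coeff 3 A = 8 * (2 * X ^ 3 + 3 * X ^ 2 + X))
    (h4 : PowerSeries.coeff 4 A = 16 * (5 * X ^ 4 + 10 * X ^ 3 + 6 * X ^ 2 + X))
    (hB : B * (1 - A) = 1) :
    PowerSeries.coeff 0 B = 1 ∧
    PowerSeries.coeff 1 B = 2 * X ∧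
    PowerSeries.coeff 2 B = 4 * (2 * X ^ 2 + X) ∧
    PowerSeries.coeff 3 B = 8 * (5 * X ^ 3 + 5 * X ^ 2 + X) ∧
    PowerSeries.coeff 4 B = 16 * (14 * X ^ 4 + 21 * X ^ 3 + 9 * X ^ 2 + X) ∧
    (∀ n s : ℕ, 1 ≤ n → n ≤ 4 → 1 ≤ s → s ≤ n →
      (s : ℚ) * (PowerSeries.coeff n B).coeff s =
        2 ^ n * (n - 1).choose (s - 1) * (n + s).choose (s - 1)) := by
  have hB' : B = 1 + B * A := by linear_combination hB
  have key : ∀ n, (PowerSeries.coeff n) B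
      = (PowerSeries.coeff n) (1 : PowerSeries (Polynomial ℚ))
        + ∑ i ∈ Finset.range (n+1),
            (PowerSeries.coeff i) B * (PowerSeries.coeff (n - i)) A := by
    intro n
    nth_rewrite 1 [hB']
    rw [map_add, PowerSeries.coeff_mul, Finset.Nat.sum_antidiagonal_eq_sum_range_succ_mk]
  have b0 : PowerSeries.coeff 0 B = 1 := by
    have := key 0
    simp [h0] at this
    simpa using this
  have b1 : PowerSeries.coeff 1 B = 2 * X := by
    have := key 1
    simp [Finset.sum_range_succ, h0, h1, b0] at this
    simpa using this
  have b2 : PowerSeries.coeff 2 B = 4 * (2 * X ^ 2 + X) := by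
    have := key 2
    simp [Finset.sum_range_succ, h0, h1, h2, b0, b1] at this
    rw [this]; ring
  have b3 : PowerSeries.coeff 3 B = 8 * (5 * X ^ 3 + 5 * X ^ 2 + X) := by
    have := key 3
    simp [Finset.sum_range_succ, h0, h1, h2, h3, b0, b1, b2] at this
    rw [this]; ring
  have b4 : PowerSeries.coeff 4 B
      = 16 * (14 * X ^ 4 + 21 * X ^ 3 + 9 * X ^ 2 + X) := by
    have := key 4
    simp [Finset.sum_range_succ, h0, h1, h2, h3, h4, b0, b1, b2, b3] at this
    rw [this]; ring
  refine ⟨b0, b1, b2, b3, b4, ?_⟩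
  intro n s hn1 hn4 hs1 hsn
  interval_cases n <;> interval_cases s <;>
    simp [b1, b2, b3, b4, mul_add, mul_comm, coeff_X, coeff_X_pow,
      Polynomial.coeff_ofNat_mul, coeff_natCast_ite] <;> norm_num [Nat.choose]
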